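/- Let M be the set of fixed-point-free involutions in the symmetric group on the set {1, 2, 3, 4, 5, 6} (M has exactly 15 elements), and let the subgroup H of S₆ generated by the permutations (1 2 3), (4 5 6) and (1 4)(2 5)(3 6) act on M by conjugation. Then this action has exactly 3 orbits, of sizes 3, 3 and 9. -/
import Mathlib

set_option maxRecDepth 100000


/-- The set of fixed-point-free involutions of `{1,…,6}` (realized on `Fin 6`). -/
def FPFInv : Set (Equiv.Perm (Fin 6)) := {σ | σ * σ = 1 ∧ ∀ i, σ i ≠ i}

/-- The subgroup of `S₆` generated by `(1 2 3)`, `(4 5 6)` and `(1 4)(2 5)(3 6)`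
(zero-indexed on `Fin 6`). -/
def H19 : Subgroup (Equiv.Perm (Fin 6)) :=
  Subgroup.closure
    {Equiv.swap 0 1 * Equiv.swap 1 2,
     Equiv.swap 3 4 * Equiv.swap 4 5,
     Equiv.swap 0 3 * Equiv.swap 1 4 * Equiv.swap 2 5}

/-- The orbits of the conjugation action of `H19` on `FPFInv`. -/
def Orbits19 : Set (Set (Equiv.Perm (Fin 6))) :=
  (fun σ => {τ | ∃ g ∈ H19, g * σ * g⁻¹ = τ}) '' FPFInv

namespace Stmt19Aux

abbrev P := Equiv.Perm (Fin 6)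

def g1 : P := Equiv.swap 0 1 * Equiv.swap 1 2
def g2 : P := Equiv.swap 3 4 * Equiv.swap 4 5
def g3 : P := Equiv.swap 0 3 * Equiv.swap 1 4 * Equiv.swap 2 5

lemma hg1 : g1 ∈ H19 := Subgroup.subset_closure (Or.inl rfl)
lemma hg2 : g2 ∈ H19 := Subgroup.subset_closure (Or.inr (Or.inl rfl))
lemma hg3 : g3 ∈ H19 := Subgroup.subset_closure (Or.inr (Or.inr rfl))

def σ1 : P := Equiv.swap 0 3 * Equiv.swap 1 4 * Equiv.swap 2 5
def σ2 : P := Equiv.swap 0 3 * Equiv.swap 1 5 * Equiv.swap 2 4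
def σ3 : P := Equiv.swap 0 1 * Equiv.swap 2 3 * Equiv.swap 4 5

def O1 : Finset P :=
  {Equiv.swap 0 3 * Equiv.swap 1 4 * Equiv.swap 2 5,
   Equiv.swap 0 5 * Equiv.swap 1 3 * Equiv.swap 2 4,
   Equiv.swap 0 4 * Equiv.swap 1 5 * Equiv.swap 2 3}

def O2 : Finset P :=
  {Equiv.swap 0 3 * Equiv.swap 1 5 * Equiv.swap 2 4,
   Equiv.swap 0 4 * Equiv.swap 1 3 * Equiv.swap 2 5,
   Equiv.swap 0 5 * Equiv.swap 1 4 * Equiv.swap 2 3}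

def O3 : Finset P :=
  {Equiv.swap 0 1 * Equiv.swap 2 3 * Equiv.swap 4 5,
   Equiv.swap 0 3 * Equiv.swap 1 2 * Equiv.swap 4 5,
   Equiv.swap 0 1 * Equiv.swap 2 4 * Equiv.swap 3 5,
   Equiv.swap 0 5 * Equiv.swap 1 2 * Equiv.swap 3 4,
   Equiv.swap 0 2 * Equiv.swap 1 3 * Equiv.swap 4 5,
   Equiv.swap 0 4 * Equiv.swap 1 2 * Equiv.swap 3 5,
   Equiv.swap 0 1 * Equiv.swap 2 5 * Equiv.swap 3 4,
   Equiv.swap 0 2 * Equiv.swap 1 5 * Equiv.swap 3 4,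
   Equiv.swap 0 2 * Equiv.swap 1 4 * Equiv.swap 3 5}

/-- The orbit of `σ` under conjugation by `H19`. -/
def orb (σ : P) : Set P := {τ | ∃ g ∈ H19, g * σ * g⁻¹ = τ}

lemma stable_inv {O : Finset P} {a : P} (h : ∀ τ ∈ O, a * τ * a⁻¹ ∈ O) :
    ∀ τ ∈ O, a⁻¹ * τ * a⁻¹⁻¹ ∈ O := by
  intro τ hτ
  obtain ⟨τ', hτ', he⟩ :=
    Finset.surj_on_of_inj_on_of_card_le (fun x _ => a * x * a⁻¹) (fun x hx => h x hx)
      (fun x y hx hy hxy => by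
        have h1 : a * x = a * y := mul_right_cancel hxy
        exact mul_left_cancel h1) le_rfl τ hτ
  have : a⁻¹ * (a * τ' * a⁻¹) * a⁻¹⁻¹ = τ' := by group
  rw [he, this]
  exact hτ'

lemma stable {O : Finset P}
    (h1 : ∀ τ ∈ O, g1 * τ * g1⁻¹ ∈ O)
    (h2 : ∀ τ ∈ O, g2 * τ * g2⁻¹ ∈ O)
    (h3 : ∀ τ ∈ O, g3 * τ * g3⁻¹ ∈ O) :
    ∀ g ∈ H19, ∀ τ ∈ O, g * τ * g⁻¹ ∈ O := by
  intro g hg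
  refine Subgroup.closure_induction (p := fun g _ => ∀ τ ∈ O, g * τ * g⁻¹ ∈ O)
    ?_ ?_ ?_ ?_ hg
  · rintro x (rfl | rfl | rfl)
    · exact h1
    · exact h2
    · exact h3
  · intro τ hτ; simpa using hτ
  · intro x y _ _ px py τ hτ
    have : (x * y) * τ * (x * y)⁻¹ = x * (y * τ * y⁻¹) * x⁻¹ := by group
    rw [this]
    exact px _ (py _ hτ)
  · intro x _ px
    exact stable_inv px

lemma orbEq1 : orb σ1 = ↑O1 := by
  ext τ
  constructor
  · rintro ⟨g, hg, rfl⟩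
    exact stable (by decide) (by decide) (by decide) g hg σ1 (by decide)
  · intro hτ
    rw [Finset.mem_coe] at hτ
    fin_cases hτ
    · exact ⟨1, one_mem _, by decide⟩
    · exact ⟨g1, hg1, by decide⟩
    · exact ⟨g2, hg2, by decide⟩

lemma orbEq2 : orb σ2 = ↑O2 := by
  ext τ
  constructor
  · rintro ⟨g, hg, rfl⟩
    exact stable (by decide) (by decide) (by decide) g hg σ2 (by decide)
  · intro hτ
    rw [Finset.mem_coe] at hτ
    fin_cases hτ
    · exact ⟨1, one_mem _, by decide⟩
    · exact ⟨g1, hg1, by decide⟩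
    · exact ⟨g1 * g1, mul_mem hg1 hg1, by decide⟩

lemma orbEq3 : orb σ3 = ↑O3 := by
  ext τ
  constructor
  · rintro ⟨g, hg, rfl⟩
    exact stable (by decide) (by decide) (by decide) g hg σ3 (by decide)
  · intro hτ
    rw [Finset.mem_coe] at hτ
    fin_cases hτ
    · exact ⟨1, one_mem _, by decide⟩
    · exact ⟨g1, hg1, by decide⟩
    · exact ⟨g2, hg2, by decide⟩
    · exact ⟨g3, hg3, by decide⟩
    · exact ⟨g1 * g1, mul_mem hg1 hg1, by decide⟩
    · exact ⟨g2 * g1, mul_mem hg2 hg1, by decide⟩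
    · exact ⟨g2 * g2, mul_mem hg2 hg2, by decide⟩
    · exact ⟨g3 * g2, mul_mem hg3 hg2, by decide⟩
    · exact ⟨g2 * g1 * g1, mul_mem (mul_mem hg2 hg1) hg1, by decide⟩

lemma orb_conj {σ h : P} (hh : h ∈ H19) : orb (h * σ * h⁻¹) = orb σ := by
  ext τ
  constructor
  · rintro ⟨g, hg, rfl⟩
    exact ⟨g * h, mul_mem hg hh, by group⟩
  · rintro ⟨g, hg, rfl⟩
    exact ⟨g * h⁻¹, mul_mem hg (inv_mem hh), by group⟩

set_option maxHeartbeats 2000000 in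
lemma hkey : ∀ σ : P, (σ * σ = 1 ∧ ∀ i, σ i ≠ i) ↔ σ ∈ O1 ∪ O2 ∪ O3 := by decide

lemma fpfEq : FPFInv = ↑(O1 ∪ O2 ∪ O3) := by
  ext σ
  rw [Finset.mem_coe]
  exact hkey σ

lemma orbitsEq : Orbits19 = {(↑O1 : Set P), ↑O2, ↑O3} := by
  ext S
  constructor
  · rintro ⟨σ, hσ, rfl⟩
    have hσ' : σ ∈ O1 ∪ O2 ∪ O3 := (hkey σ).mp ⟨hσ.1, hσ.2⟩
    rcases Finset.mem_union.mp hσ' with hσ'' | hσ''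
    rcases Finset.mem_union.mp hσ'' with h' | h'
    · have : σ ∈ orb σ1 := orbEq1 ▸ Finset.mem_coe.mpr h'
      obtain ⟨g, hg, rfl⟩ := this
      have : orb (g * σ1 * g⁻¹) = ↑O1 := (orb_conj hg).trans orbEq1
      exact Or.inl this
    · have : σ ∈ orb σ2 := orbEq2 ▸ Finset.mem_coe.mpr h'
      obtain ⟨g, hg, rfl⟩ := this
      have : orb (g * σ2 * g⁻¹) = ↑O2 := (orb_conj hg).trans orbEq2
      exact Or.inr (Or.inl this)
    · have : σ ∈ orb σ3 := orbEq3 ▸ Finset.mem_coe.mpr hσ''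
      obtain ⟨g, hg, rfl⟩ := this
      have : orb (g * σ3 * g⁻¹) = ↑O3 := (orb_conj hg).trans orbEq3
      exact Or.inr (Or.inr this)
  · rintro (rfl | rfl | rfl)
    · exact ⟨σ1, ⟨by decide, by decide⟩, orbEq1⟩
    · exact ⟨σ2, ⟨by decide, by decide⟩, orbEq2⟩
    · exact ⟨σ3, ⟨by decide, by decide⟩, orbEq3⟩

lemma ne12 : (↑O1 : Set P) ≠ ↑O2 := fun h => absurd (Finset.coe_injective h) (by decide)
lemma ne13 : (↑O1 : Set P) ≠ ↑O3 := fun h => absurd (Finset.coe_injective h) (by decide)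
lemma ne23 : (↑O2 : Set P) ≠ ↑O3 := fun h => absurd (Finset.coe_injective h) (by decide)

lemma nc1 : (↑O1 : Set P).ncard = 3 := by rw [Set.ncard_coe_finset]; decide
lemma nc2 : (↑O2 : Set P).ncard = 3 := by rw [Set.ncard_coe_finset]; decide
lemma nc3 : (↑O3 : Set P).ncard = 9 := by rw [Set.ncard_coe_finset]; decide

end Stmt19Aux

open Stmt19Aux in
theorem stmt19 :
    FPFInv.ncard = 15 ∧
    Orbits19.ncard = 3 ∧
    {S ∈ Orbits19 | S.ncard = 3}.ncard = 2 ∧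
    {S ∈ Orbits19 | S.ncard = 9}.ncard = 1 := by
  refine ⟨?_, ?_, ?_, ?_⟩
  · rw [fpfEq, Set.ncard_coe_finset]
    decide
  · rw [orbitsEq]
    rw [Set.ncard_insert_of_notMem (by simp only [Set.mem_insert_iff, Set.mem_singleton_iff]; push_neg; exact ⟨ne12, ne13⟩)
      ((Set.finite_singleton _).insert _), Set.ncard_pair ne23]
  · have : {S ∈ Orbits19 | S.ncard = 3} = {(↑O1 : Set P), ↑O2} := by
      rw [orbitsEq]
      ext S
      simp only [Set.mem_setOf_eq, Set.mem_insert_iff, Set.mem_singleton_iff]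
      constructor
      · rintro ⟨(rfl | rfl | rfl), h⟩
        · exact Or.inl rfl
        · exact Or.inr rfl
        · rw [nc3] at h; omega
      · rintro (rfl | rfl)
        · exact ⟨Or.inl rfl, nc1⟩
        · exact ⟨Or.inr (Or.inl rfl), nc2⟩
    rw [this, Set.ncard_pair ne12]
  · have : {S ∈ Orbits19 | S.ncard = 9} = {(↑O3 : Set P)} := by
      rw [orbitsEq]
      ext S
      simp only [Set.mem_setOf_eq, Set.mem_insert_iff, Set.mem_singleton_iff]
      constructor
      · rintro ⟨(rfl | rfl | rfl), h⟩
        · rw [nc1] at h; omega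
        · rw [nc2] at h; omega
        · rfl
      · rintro rfl
        exact ⟨Or.inr (Or.inr rfl), nc3⟩
    rw [this, Set.ncard_singleton]
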